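/- Let S = {1, …, n}, let r ∈ ℕ with 2 ≤ r ≤ n, and let 𝓗′ be a nonempty collection of subsets of S such that every X ∈ 𝓗′ satisfies r ≤ |X| < n, and any two distinct X, Y ∈ 𝓗′ satisfy |X ∩ Y| ≤ r − 2. Define 𝓒_r := {A ⊆ S : |A| = r and A ⊆ X for some X ∈ 𝓗′} and 𝓗 := 𝓗′ ∪ {A ⊆ S : |A| = r − 1 and every r-subset D of S with A ⊂ D satisfies D ∉ 𝓒_r}. Then there exists a paving matroid on S of rank r whose set of hyperplanes is exactly 𝓗, whose set of circuits of cardinality r is exactly 𝓒_r, and whose set of bases is exactly the set of r-subsets of S not in 𝓒_r. -/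

import Mathlib

open Set

namespace Matroid

variable {α : Type*}

/-- A circuit of a matroid: a minimal dependent set. -/
def Circuit' (M : Matroid α) (C : Set α) : Prop :=
  M.Dep C ∧ ∀ D, D ⊂ C → M.Indep D

/-- The rank of a subset `X`: the maximum cardinality of an independent subset of `X`. -/
noncomputable def rk' (M : Matroid α) (X : Set α) : ℕ :=
  sSup {n | ∃ I, I ⊆ X ∧ M.Indep I ∧ I.ncard = n}

/-- A hyperplane of a matroid of rank `r`: a maximal subset of the ground set of rank `r - 1`. -/
def Hyperplane' (M : Matroid α) (H : Set α) : Prop :=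
  H ⊆ M.E ∧ M.rk' H = M.rk' M.E - 1 ∧
    ∀ Y, H ⊂ Y → Y ⊆ M.E → M.rk' Y ≠ M.rk' M.E - 1

/-- A matroid is paving if it has no circuits of cardinality less than its rank. -/
def Paving (M : Matroid α) : Prop :=
  ∀ C, M.Circuit' C → M.rk' M.E ≤ C.ncard

/-- A matroid is sparse-paving if both it and its dual are paving. -/
def SparsePaving (M : Matroid α) : Prop :=
  M.Paving ∧ M✶.Paving

end Matroid

theorem stmt3 {α : Type*} (S : Set α) (hS : S.Finite) (n r : ℕ) (hn : S.ncard = n)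
    (hr2 : 2 ≤ r) (hrn : r ≤ n)
    (H' : Set (Set α)) (hne : H'.Nonempty) (hsub : ∀ X ∈ H', X ⊆ S)
    (hcard : ∀ X ∈ H', r ≤ X.ncard ∧ X.ncard < n)
    (hint : ∀ X ∈ H', ∀ Y ∈ H', X ≠ Y → (X ∩ Y).ncard ≤ r - 2)
    (Cr : Set (Set α)) (hCr : Cr = {A | A ⊆ S ∧ A.ncard = r ∧ ∃ X ∈ H', A ⊆ X})
    (H : Set (Set α))
    (hH : H = H' ∪ {A | A ⊆ S ∧ A.ncard = r - 1 ∧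
      ∀ D, D ⊆ S → D.ncard = r → A ⊂ D → D ∉ Cr}) :
    ∃ M : Matroid α, M.E = S ∧ M.rk' M.E = r ∧ M.Paving ∧
      (∀ X, M.Hyperplane' X ↔ X ∈ H) ∧
      (∀ C, (M.Circuit' C ∧ C.ncard = r) ↔ C ∈ Cr) ∧
      (∀ B, M.IsBase B ↔ (B ⊆ S ∧ B.ncard = r ∧ B ∉ Cr)) := by
  have hfin : ∀ {I : Set α}, I ⊆ S → I.Finite := fun h => hS.subset h
  have hCr_card : ∀ A ∈ Cr, A.ncard = r := by
    rw [hCr]; rintro A ⟨-, h, -⟩; exact h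
  have hCr_sub : ∀ A ∈ Cr, A ⊆ S := by
    rw [hCr]; rintro A ⟨h, -, -⟩; exact h
  have hCr_ex : ∀ A ∈ Cr, ∃ X ∈ H', A ⊆ X := by
    rw [hCr]; rintro A ⟨-, -, h⟩; exact h
  have hCr_of : ∀ A, A ⊆ S → A.ncard = r → (∃ X ∈ H', A ⊆ X) → A ∈ Cr := by
    rw [hCr]; exact fun A h1 h2 h3 => ⟨h1, h2, h3⟩
  -- the key covering lemma
  have key : ∀ I T : Set α, I ⊆ T → T ⊆ S → I.ncard = r - 1 → (T \ I).Nonempty →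
      (∀ e ∈ T \ I, insert e I ∈ Cr) → ∃ X ∈ H', T ⊆ X := by
    rintro I T hIT hTS hIc ⟨e₀, he₀⟩ hall
    obtain ⟨X₀, hX₀, hsub₀⟩ := hCr_ex _ (hall e₀ he₀)
    refine ⟨X₀, hX₀, fun x hx => ?_⟩
    by_cases hxI : x ∈ I
    · exact hsub₀ (mem_insert_of_mem _ hxI)
    · obtain ⟨X₁, hX₁, hsub₁⟩ := hCr_ex _ (hall x ⟨hx, hxI⟩)
      have hX10 : X₁ = X₀ := by
        by_contra hne'
        have h1 : I ⊆ X₁ ∩ X₀ := fun y hy =>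
          ⟨hsub₁ (mem_insert_of_mem _ hy), hsub₀ (mem_insert_of_mem _ hy)⟩
        have h2 : (X₁ ∩ X₀).ncard ≤ r - 2 := hint _ hX₁ _ hX₀ hne'
        have h3 : I.ncard ≤ (X₁ ∩ X₀).ncard :=
          ncard_le_ncard h1 (hfin (inter_subset_right.trans (hsub _ hX₀)))
        omega
      exact hX10 ▸ hsub₁ (mem_insert _ _)
  -- every r-subset in Cr ⇒ covered
  have key2 : ∀ T : Set α, T ⊆ S → r ≤ T.ncard →
      (∀ D, D ⊆ T → D.ncard = r → D ∈ Cr) → ∃ X ∈ H', T ⊆ X := by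
    intro T hTS hTr hall
    obtain ⟨A₀, hA₀T, hA₀c⟩ := exists_subset_card_eq hTr
    have hA₀ne : A₀.Nonempty := nonempty_of_ncard_ne_zero (by omega)
    obtain ⟨a, ha⟩ := hA₀ne
    have hIc : (A₀ \ {a}).ncard = r - 1 := by
      rw [ncard_diff_singleton_of_mem ha]
      omega
    refine key _ T (diff_subset.trans hA₀T) hTS hIc
      ⟨a, hA₀T ha, fun h => h.2 rfl⟩ ?_
    intro e he
    have hsub' : insert e (A₀ \ {a}) ⊆ T := insert_subset he.1 (diff_subset.trans hA₀T)
    refine hall _ hsub' ?_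
    rw [ncard_insert_of_notMem he.2 (hfin ((diff_subset.trans hA₀T).trans hTS))]
    omega
  -- independence predicate
  set P : Set α → Prop := fun I => I ⊆ S ∧ I.ncard ≤ r ∧ I ∉ Cr with hPdef
  have P_empty : P ∅ := ⟨empty_subset _, by simp, fun hm => by
    have := hCr_card _ hm; simp at this; omega⟩
  have P_subset : ∀ ⦃I J : Set α⦄, P J → I ⊆ J → P I := by
    rintro I J ⟨hJS, hJr, hJCr⟩ hIJ
    refine ⟨hIJ.trans hJS, (ncard_le_ncard hIJ (hfin hJS)).trans hJr, fun hm => ?_⟩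
    have hIc := hCr_card _ hm
    have : I = J := eq_of_subset_of_ncard_le hIJ (by omega) (hfin hJS)
    exact hJCr (this ▸ hm)
  have P_aug : ∀ ⦃I J : Set α⦄, P I → P J → I.ncard < J.ncard →
      ∃ e ∈ J, e ∉ I ∧ P (insert e I) := by
    rintro I J ⟨hIS, hIr, hICr⟩ ⟨hJS, hJr, hJCr⟩ hlt
    obtain ⟨e₀, he₀J, he₀I⟩ := exists_mem_notMem_of_ncard_lt_ncard hlt (hfin hIS)
    by_cases hex : ∃ e ∈ J, e ∉ I ∧ insert e I ∉ Cr
    · obtain ⟨e, heJ, heI, hnc⟩ := hex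
      refine ⟨e, heJ, heI, insert_subset (hJS heJ) hIS, ?_, hnc⟩
      rw [ncard_insert_of_notMem heI (hfin hIS)]; omega
    · push_neg at hex
      exfalso
      have hall : ∀ e ∈ (J ∪ I) \ I, insert e I ∈ Cr :=
        fun e he => hex e (he.1.resolve_right he.2) he.2
      have hIc : I.ncard = r - 1 := by
        have h := hCr_card _ (hall e₀ ⟨Or.inl he₀J, he₀I⟩)
        rw [ncard_insert_of_notMem he₀I (hfin hIS)] at h; omega
      obtain ⟨X, hX, hTX⟩ := key I (J ∪ I) subset_union_right (union_subset hJS hIS) hIc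
        ⟨e₀, Or.inl he₀J, he₀I⟩ hall
      exact hJCr (hCr_of J hJS (by omega) ⟨X, hX, subset_union_left.trans hTX⟩)
  have P_ext : ∀ I, P I → I.ncard < r → ∃ e ∈ S, e ∉ I ∧ P (insert e I) := by
    rintro I ⟨hIS, hIr, hICr⟩ hlt
    obtain ⟨e₀, he₀S, he₀I⟩ := exists_mem_notMem_of_ncard_lt_ncard
      (show I.ncard < S.ncard by omega) (hfin hIS)
    by_cases hex : ∃ e ∈ S, e ∉ I ∧ insert e I ∉ Cr
    · obtain ⟨e, heS, heI, hnc⟩ := hex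
      refine ⟨e, heS, heI, insert_subset heS hIS, ?_, hnc⟩
      rw [ncard_insert_of_notMem heI (hfin hIS)]; omega
    · push_neg at hex
      exfalso
      have hall : ∀ e ∈ S \ I, insert e I ∈ Cr := fun e he => hex e he.1 he.2
      have hIc : I.ncard = r - 1 := by
        have h := hCr_card _ (hall e₀ ⟨he₀S, he₀I⟩)
        rw [ncard_insert_of_notMem he₀I (hfin hIS)] at h; omega
      obtain ⟨X, hX, hTX⟩ := key I S hIS Subset.rfl hIc ⟨e₀, he₀S, he₀I⟩ hall
      have h1 := (hcard X hX).2
      have h2 : S.ncard ≤ X.ncard := ncard_le_ncard hTX (hfin (hsub _ hX))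
      omega
  set M : Matroid α :=
    (IndepMatroid.ofFinite hS P P_empty P_subset P_aug (fun I hI => hI.1)).matroid with hM
  have hME : M.E = S := rfl
  have hMI : ∀ I, M.Indep I ↔ P I := fun I => Iff.rfl
  -- independent sets of each size
  have exists_indep : ∀ k, k ≤ r → ∃ I, I ⊆ S ∧ P I ∧ I.ncard = k := by
    intro k hk
    induction k with
    | zero => exact ⟨∅, empty_subset _, P_empty, ncard_empty _⟩
    | succ m ih =>
      obtain ⟨I, hIS, hPI, hIc⟩ := ih (by omega)
      obtain ⟨e, heS, heI, hPe⟩ := P_ext I hPI (by omega)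
      exact ⟨insert e I, insert_subset heS hIS, hPe,
        by rw [ncard_insert_of_notMem heI (hfin hIS)]; omega⟩
  -- rank computation lemma
  have rk_eq : ∀ (X : Set α) (k : ℕ), (∃ I, I ⊆ X ∧ P I ∧ I.ncard = k) →
      (∀ I, I ⊆ X → P I → I.ncard ≤ k) → M.rk' X = k := by
    intro X k h1 h2
    have hbd : ∀ m ∈ {n | ∃ I, I ⊆ X ∧ M.Indep I ∧ I.ncard = n}, m ≤ k := by
      rintro m ⟨I, hIX, hI, rfl⟩
      exact h2 I hIX ((hMI I).1 hI)
    obtain ⟨I, hIX, hPI, hIc⟩ := h1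
    have hmem : k ∈ {n | ∃ I, I ⊆ X ∧ M.Indep I ∧ I.ncard = n} :=
      ⟨I, hIX, (hMI I).2 hPI, hIc⟩
    exact le_antisymm (csSup_le ⟨k, hmem⟩ hbd) (le_csSup ⟨k, hbd⟩ hmem)
  have hrkS : M.rk' S = r := by
    refine rk_eq S r ?_ (fun I _ hI => hI.2.1)
    obtain ⟨I, h1, h2, h3⟩ := exists_indep r le_rfl
    exact ⟨I, h1, h2, h3⟩
  have rkH' : ∀ X ∈ H', M.rk' X = r - 1 := by
    intro X hX
    refine rk_eq X (r - 1) ?_ ?_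
    · obtain ⟨I, hIX, hIc⟩ := exists_subset_card_eq
        (show r - 1 ≤ X.ncard from le_trans (by omega) (hcard X hX).1)
      refine ⟨I, hIX, ⟨hIX.trans (hsub X hX), by omega, fun hm => ?_⟩, hIc⟩
      have := hCr_card _ hm; omega
    · intro I hIX hI
      by_contra h
      exact hI.2.2 (hCr_of I hI.1 (by have := hI.2.1; omega) ⟨X, hX, hIX⟩)
  have rk_small : ∀ X, X ⊆ S → X.ncard ≤ r - 1 → M.rk' X = X.ncard := by
    intro X hXS hXc
    refine rk_eq X X.ncard ⟨X, Subset.rfl, ⟨hXS, by omega, fun hm => ?_⟩, rfl⟩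
      (fun I hIX _ => ncard_le_ncard hIX (hfin hXS))
    have := hCr_card _ hm; omega
  have rk_full : ∀ X, X ⊆ S → (∃ D, D ⊆ X ∧ D.ncard = r ∧ D ∉ Cr) → M.rk' X = r := by
    rintro X hXS ⟨D, hDX, hDc, hDCr⟩
    exact rk_eq X r ⟨D, hDX, ⟨hDX.trans hXS, le_of_eq hDc, hDCr⟩, hDc⟩
      (fun I _ hI => hI.2.1)
  have cover_or : ∀ Y, Y ⊆ S → r ≤ Y.ncard → (M.rk' Y = r ∨ ∃ X ∈ H', Y ⊆ X) := by
    intro Y hYS hYr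
    by_cases hex : ∃ D, D ⊆ Y ∧ D.ncard = r ∧ D ∉ Cr
    · exact Or.inl (rk_full Y hYS hex)
    · push_neg at hex
      exact Or.inr (key2 Y hYS hYr (fun D h1 h2 => hex D h1 h2))
  refine ⟨M, rfl, hrkS, ?_, ?_, ?_, ?_⟩
  -- Paving
  · rintro C ⟨hdep, -⟩
    show M.rk' S ≤ C.ncard
    rw [hrkS]
    by_contra h
    push_neg at h
    exact hdep.1 ((hMI C).2 ⟨hdep.2, by omega,
      fun hm => by have := hCr_card _ hm; omega⟩)
  -- Hyperplanes
  · intro X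
    constructor
    · rintro ⟨hXS, hrk, hmax⟩
      rw [hME] at hXS
      rw [show M.rk' M.E = r from hrkS] at hrk hmax
      rcases Nat.lt_or_ge X.ncard r with hlt | hge
      · rcases Nat.lt_or_ge X.ncard (r - 1) with h2 | h2
        · exfalso
          rw [rk_small X hXS (by omega)] at hrk
          omega
        · have hXc : X.ncard = r - 1 := by omega
          rw [hH]
          refine Or.inr ⟨hXS, hXc, ?_⟩
          intro D hDS hDc hXD hDCr
          obtain ⟨X', hX', hDX'⟩ := hCr_ex D hDCr
          have hXX' : X ⊂ X' := hXD.trans_subset hDX'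
          exact hmax X' hXX' (hsub _ hX') (rkH' _ hX')
      · rcases cover_or X hXS hge with h | ⟨X', hX', hXX'⟩
        · exfalso; omega
        · by_cases he : X = X'
          · rw [hH]; exact Or.inl (he ▸ hX')
          · exact absurd (rkH' _ hX')
              (hmax X' (ssubset_of_subset_of_ne hXX' he) (hsub _ hX'))
    · intro hXH
      rw [hH] at hXH
      rcases hXH with hX | ⟨hXS, hXc, hXprop⟩
      · refine ⟨hsub _ hX, ?_, ?_⟩
        · rw [show M.rk' M.E = r from hrkS, rkH' _ hX]
        · intro Y hXY hYS
          rw [hME] at hYS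
          rw [show M.rk' M.E = r from hrkS]
          have hYr : r ≤ Y.ncard :=
            le_trans (hcard _ hX).1 (ncard_le_ncard hXY.subset (hfin hYS))
          rcases cover_or Y hYS hYr with h | ⟨X'', hX'', hYX''⟩
          · rw [h]; omega
          · exfalso
            by_cases he : X = X''
            · exact hXY.not_subset (he ▸ hYX'')
            · have h1 := hint _ hX _ hX'' he
              have h2 : X ⊆ X ∩ X'' :=
                subset_inter Subset.rfl (hXY.subset.trans hYX'')
              have h3 : X.ncard ≤ (X ∩ X'').ncard :=
                ncard_le_ncard h2 (hfin (inter_subset_left.trans (hsub _ hX)))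
              have h4 := (hcard _ hX).1
              omega
      · refine ⟨hXS, ?_, ?_⟩
        · rw [show M.rk' M.E = r from hrkS, rk_small X hXS (le_of_eq hXc), hXc]
        · intro Y hXY hYS
          rw [hME] at hYS
          rw [show M.rk' M.E = r from hrkS]
          obtain ⟨e, heY, heX⟩ := exists_of_ssubset hXY
          have hDY : insert e X ⊆ Y := insert_subset heY hXY.subset
          have hDc : (insert e X).ncard = r := by
            rw [ncard_insert_of_notMem heX (hfin hXS)]; omega
          have hDCr : insert e X ∉ Cr :=
            hXprop _ (hDY.trans hYS) hDc (ssubset_insert heX)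
          rw [rk_full Y hYS ⟨insert e X, hDY, hDc, hDCr⟩]
          omega
  -- Circuits
  · intro C
    constructor
    · rintro ⟨⟨hdep, -⟩, hCc⟩
      by_contra h
      exact hdep.1 ((hMI C).2 ⟨hdep.2, le_of_eq hCc, h⟩)
    · intro h
      have hCS := hCr_sub _ h
      have hCc := hCr_card _ h
      refine ⟨⟨⟨fun hI => ((hMI C).1 hI).2.2 h, hCS⟩, ?_⟩, hCc⟩
      intro D hD
      have hDlt : D.ncard < r := hCc ▸ ncard_lt_ncard hD (hfin hCS)
      exact (hMI D).2 ⟨hD.subset.trans hCS, by omega,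
        fun hm => by have := hCr_card _ hm; omega⟩
  -- Bases
  · intro B
    rw [Matroid.isBase_iff_maximal_indep]
    constructor
    · intro hB
      have hPB : P B := (hMI B).1 hB.1
      have hBr : B.ncard = r := by
        by_contra h
        obtain ⟨e, heS, heI, hPe⟩ := P_ext B hPB (lt_of_le_of_ne hPB.2.1 h)
        exact heI (hB.2 ((hMI _).2 hPe) (subset_insert _ _) (mem_insert e B))
      exact ⟨hPB.1, hBr, hPB.2.2⟩
    · rintro ⟨hBS, hBr, hBCr⟩
      refine ⟨(hMI B).2 ⟨hBS, le_of_eq hBr, hBCr⟩, ?_⟩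
      intro I hI hBI
      have hPI := (hMI I).1 hI
      have : B = I := eq_of_subset_of_ncard_le hBI (by rw [hBr]; exact hPI.2.1) (hfin hPI.1)
      exact this ▸ Subset.rfl
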